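/- arXiv:math/0010238 — 2 statements merged into one kernel-verified Lean document; each statement's English description precedes it below -/
import Mathlib

section
/- For each n ≥ 2 there exist partitions Δ_n and ∇_n of σ_n = {2^n, ..., 2^{n+1}-1} and numbers m_n ≥ 2^{n/8 - 2} such that: (1) every A ∈ ∇_n satisfies m_n ≤ card(A) ≤ 2 m_n; (2) for every A ∈ ∇_n and B ∈ Δ_n, card(A ∩ B) ≤ 1; (3) for every A ∈ ∇_n and every k with 1 ≤ k ≤ 9, the image f_k(A) is contained in a single element of Δ_{n-1}, Δ_n, or Δ_{n+1}. -/
/-- σ_n = {2^n, ..., 2^{n+1}-1} as a finite set. -/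
def sigmaF (n : ℕ) : Finset ℕ := Finset.Ico (2 ^ n) (2 ^ (n + 1))

/-- Szankowski's index functions f_1, ..., f_9. -/
def f (k j : ℕ) : ℕ :=
  let i := j / 4
  let l := j % 4
  match k with
  | 1 => 2 * i
  | 2 => 2 * i + 1
  | 3 => 4 * i + (l + 1) % 4
  | 4 => 4 * i + (l + 2) % 4
  | 5 => 4 * i + (l + 3) % 4
  | 6 => if l ≤ 1 then 8 * i else 8 * i + 4
  | 7 => if l ≤ 1 then 8 * i + 1 else 8 * i + 5
  | 8 => if l ≤ 1 then 8 * i + 2 else 8 * i + 6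
  | _ => if l ≤ 1 then 8 * i + 3 else 8 * i + 7

/-- P is a partition of S into (nonempty) pairwise disjoint sets covering S. -/
def IsPartitionOf (P : Finset (Finset ℕ)) (S : Finset ℕ) : Prop :=
  (∀ A ∈ P, A.Nonempty) ∧ (∀ A ∈ P, ∀ B ∈ P, A ≠ B → Disjoint A B) ∧ P.biUnion id = S

namespace SzankowskiProof

def vv (n : ℕ) : ℕ := (n + 7) / 8 - 2
def off (n : ℕ) : ℕ := if n % 2 = 0 then 4 * vv (n + 1) else 0
def qp (n l : ℕ) : ℕ := n - (off n + (l + 1) * vv n)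
def wv (n j : ℕ) : ℕ := j / 2 ^ qp n (j % 4) % 2 ^ vv n
def core (n j : ℕ) : ℕ :=
  j % 2 ^ qp n (j % 4) + 2 ^ (qp n (j % 4) + vv n) * (j / 2 ^ (qp n (j % 4) + vv n))
def gD (n j : ℕ) : ℕ × ℕ := (j % 4, wv n j)
def gN (n j : ℕ) : ℕ × ℕ := (j % 4, core n j)
def Del (n : ℕ) : Finset (Finset ℕ) :=
  (sigmaF n).image fun a => (sigmaF n).filter fun j => gD n j = gD n a
def Nb (n : ℕ) : Finset (Finset ℕ) :=
  (sigmaF n).image fun a => (sigmaF n).filter fun j => gN n j = gN n a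
def tl (n k : ℕ) : ℕ := if k ≤ 2 then n - 1 else if k ≤ 5 then n else n + 1

lemma pow2_pos (x : ℕ) : 0 < 2 ^ x := pow_pos (by norm_num) x

lemma decomp (n j : ℕ) : j = core n j + 2 ^ qp n (j % 4) * wv n j := by
  unfold core wv
  set q := qp n (j % 4)
  have h3 : j / 2 ^ q / 2 ^ vv n = j / 2 ^ (q + vv n) := by
    rw [Nat.div_div_eq_div_mul, pow_add]
  calc j = 2 ^ q * (j / 2 ^ q) + j % 2 ^ q := by rw [Nat.div_add_mod]
    _ = 2 ^ q * (2 ^ vv n * (j / 2 ^ (q + vv n)) + j / 2 ^ q % 2 ^ vv n) + j % 2 ^ q := by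
        rw [← h3, Nat.div_add_mod, Nat.div_add_mod, Nat.div_add_mod]
    _ = _ := by rw [pow_add]; ring

lemma small_lt {a q V w : ℕ} (ha : a < 2 ^ q) (hw : w < 2 ^ V) :
    a + 2 ^ q * w < 2 ^ (q + V) := by
  calc a + 2 ^ q * w < 2 ^ q + 2 ^ q * w := by omega
    _ = 2 ^ q * (w + 1) := by ring
    _ ≤ 2 ^ q * 2 ^ V := Nat.mul_le_mul_left _ (by omega)
    _ = 2 ^ (q + V) := (pow_add 2 q V).symm

lemma b1 {a q V w : ℕ} (ha : a < 2 ^ q) (X : ℕ) :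
    (a + 2 ^ (q + V) * X + 2 ^ q * w) % 2 ^ q = a := by
  have h : a + 2 ^ (q + V) * X + 2 ^ q * w = a + 2 ^ q * (w + 2 ^ V * X) := by
    rw [pow_add]; ring
  rw [h, Nat.add_mul_mod_self_left, Nat.mod_eq_of_lt ha]

lemma b2 {a q V w : ℕ} (ha : a < 2 ^ q) (hw : w < 2 ^ V) (X : ℕ) :
    (a + 2 ^ (q + V) * X + 2 ^ q * w) / 2 ^ q % 2 ^ V = w := by
  have h : a + 2 ^ (q + V) * X + 2 ^ q * w = a + 2 ^ q * (w + 2 ^ V * X) := by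
    rw [pow_add]; ring
  rw [h, Nat.add_mul_div_left _ _ (pow2_pos q), Nat.div_eq_of_lt ha, zero_add,
    Nat.add_mul_mod_self_left, Nat.mod_eq_of_lt hw]

lemma b3 {a q V w : ℕ} (ha : a < 2 ^ q) (hw : w < 2 ^ V) (X : ℕ) :
    (a + 2 ^ (q + V) * X + 2 ^ q * w) / 2 ^ (q + V) = X := by
  have h : a + 2 ^ (q + V) * X + 2 ^ q * w = (a + 2 ^ q * w) + 2 ^ (q + V) * X := by ring
  rw [h, Nat.add_mul_div_left _ _ (pow2_pos (q + V)),
    Nat.div_eq_of_lt (small_lt ha hw), zero_add]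

lemma extract_inv {a q V X w w' Q W : ℕ} (ha : a < 2 ^ q) (hw : w < 2 ^ V) (hw' : w' < 2 ^ V)
    (hdis : Q + W ≤ q ∨ q + V ≤ Q) :
    (a + 2 ^ (q + V) * X + 2 ^ q * w) / 2 ^ Q % 2 ^ W
      = (a + 2 ^ (q + V) * X + 2 ^ q * w') / 2 ^ Q % 2 ^ W := by
  rcases hdis with hdis | hdis
  · have key : ∀ u : ℕ, (a + 2 ^ (q + V) * X + 2 ^ q * u) / 2 ^ Q % 2 ^ W
        = ((a + 2 ^ (q + V) * X) / 2 ^ Q) % 2 ^ W := by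
      intro u
      have h1 : 2 ^ q * u = 2 ^ Q * (2 ^ (q - Q) * u) := by
        rw [← mul_assoc, ← pow_add]; congr 2; omega
      rw [h1, Nat.add_mul_div_left _ _ (pow2_pos Q)]
      have h2 : 2 ^ (q - Q) * u = 2 ^ W * (2 ^ (q - Q - W) * u) := by
        rw [← mul_assoc, ← pow_add]; congr 2; omega
      rw [h2, Nat.add_mul_mod_self_left]
    rw [key w, key w']
  · have key : ∀ u : ℕ, u < 2 ^ V → (a + 2 ^ (q + V) * X + 2 ^ q * u) / 2 ^ Q % 2 ^ W
        = X / 2 ^ (Q - (q + V)) % 2 ^ W := by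
      intro u hu
      have h1 : 2 ^ Q = 2 ^ (q + V) * 2 ^ (Q - (q + V)) := by
        rw [← pow_add]; congr 1; omega
      rw [h1, ← Nat.div_div_eq_div_mul, b3 ha hu X]
    rw [key w hw, key w' hw']

lemma shift_div {r s Q : ℕ} (x : ℕ) (hr : r < 2 ^ s) (hsQ : s ≤ Q) :
    (2 ^ s * x + r) / 2 ^ Q = x / 2 ^ (Q - s) := by
  have h1 : (2 ^ s * x + r) / 2 ^ s = x := by
    rw [Nat.mul_add_div (pow2_pos s), Nat.div_eq_of_lt hr, add_zero]
  have h2 : 2 ^ Q = 2 ^ s * 2 ^ (Q - s) := by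
    rw [← pow_add]; congr 1; omega
  rw [h2, ← Nat.div_div_eq_div_mul, h1]

lemma memC {n q V a w X : ℕ} (hqv : q + V ≤ n) (ha : a < 2 ^ q) (hw : w < 2 ^ V)
    (hX1 : 2 ^ (n - (q + V)) ≤ X) (hX2 : X < 2 ^ (n + 1 - (q + V))) :
    2 ^ n ≤ a + 2 ^ (q + V) * X + 2 ^ q * w ∧ a + 2 ^ (q + V) * X + 2 ^ q * w < 2 ^ (n + 1) := by
  constructor
  · calc (2 : ℕ) ^ n = 2 ^ (q + V) * 2 ^ (n - (q + V)) := by rw [← pow_add]; congr 1; omega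
      _ ≤ 2 ^ (q + V) * X := Nat.mul_le_mul_left _ hX1
      _ ≤ a + 2 ^ (q + V) * X + 2 ^ q * w := by omega
  · calc a + 2 ^ (q + V) * X + 2 ^ q * w
        = (a + 2 ^ q * w) + 2 ^ (q + V) * X := by ring
      _ < 2 ^ (q + V) + 2 ^ (q + V) * X := by
          have := small_lt ha hw; omega
      _ = 2 ^ (q + V) * (X + 1) := by ring
      _ ≤ 2 ^ (q + V) * 2 ^ (n + 1 - (q + V)) := Nat.mul_le_mul_left _ (by omega)
      _ = 2 ^ (n + 1) := by rw [← pow_add]; congr 1; omega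

lemma vv_pos_n (n : ℕ) (h : 1 ≤ vv n) : 17 ≤ n := by unfold vv at h; omega

lemma L1 (n : ℕ) (h : 1 ≤ vv n) : off n + 4 * vv n + 4 ≤ n := by
  unfold off vv at *
  by_cases h2 : n % 2 = 0 <;> simp [h2] <;> omega

lemma qp_ge (n l : ℕ) (hl : l < 4) (h : 1 ≤ vv n) : 4 ≤ qp n l := by
  have := L1 n h
  unfold qp
  interval_cases l <;> omega

lemma qp_add_le (n l : ℕ) (hl : l < 4) : qp n l + vv n ≤ n := by
  rcases Nat.eq_zero_or_pos (vv n) with h | h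
  · unfold qp; omega
  · have := L1 n h
    unfold qp
    interval_cases l <;> omega

lemma disjB (n l r : ℕ) (hl : l < 4) (hr : r < 4) (hne : l ≠ r) (hv : 1 ≤ vv n) :
    qp n r + vv n ≤ qp n l ∨ qp n l + vv n ≤ qp n r := by
  have := L1 n hv
  unfold qp
  unfold off vv at *
  by_cases h2 : n % 2 = 0 <;> simp [h2] at * <;> interval_cases l <;> interval_cases r <;> omega

lemma disjA (n l r : ℕ) (hn : 2 ≤ n) (hl : l < 4) (hr : r < 4)
    (hv : 1 ≤ vv n) (hv' : 1 ≤ vv (n - 1)) :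
    qp (n - 1) r + 1 + vv (n - 1) ≤ qp n l ∨ qp n l + vv n ≤ qp (n - 1) r + 1 := by
  have h1 := L1 n hv
  have h2 := L1 (n - 1) hv'
  unfold qp
  unfold off vv at *
  by_cases hp : n % 2 = 0
  · have hp' : ¬((n - 1) % 2 = 0) := by omega
    simp [hp, hp'] at *
    interval_cases l <;> interval_cases r <;> omega
  · have hp' : (n - 1) % 2 = 0 := by omega
    have he : n - 1 + 1 = n := by omega
    simp [hp, hp', he] at *
    interval_cases l <;> interval_cases r <;> omega

lemma disjC (n l r : ℕ) (hl : l < 4) (hr : r < 4)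
    (hv : 1 ≤ vv n) (hv' : 1 ≤ vv (n + 1)) :
    qp (n + 1) r - 1 + vv (n + 1) ≤ qp n l ∨ qp n l + vv n ≤ qp (n + 1) r - 1 := by
  have h1 := L1 n hv
  have h2 := L1 (n + 1) hv'
  have h3 := qp_ge (n + 1) r hr hv'
  unfold qp at *
  unfold off vv at *
  by_cases hp : n % 2 = 0
  · have hp' : ¬((n + 1) % 2 = 0) := by omega
    simp [hp, hp'] at *
    interval_cases l <;> interval_cases r <;> omega
  · have hp' : (n + 1) % 2 = 0 := by omega
    simp [hp, hp'] at *
    interval_cases l <;> interval_cases r <;> omega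

lemma keyA (n l q : ℕ) (hn : 2 ≤ n) (hl : l < 4) (hq : q = qp n l) (hv : 1 ≤ vv n)
    (j j' ε : ℕ) (hε : ε ≤ 1)
    (hinv : ∀ Q W : ℕ, Q + W ≤ q ∨ q + vv n ≤ Q → j / 2 ^ Q % 2 ^ W = j' / 2 ^ Q % 2 ^ W) :
    gD (n - 1) (2 * (j / 4) + ε) = gD (n - 1) (2 * (j' / 4) + ε) := by
  have hq4 : 4 ≤ q := hq ▸ qp_ge n l hl hv
  have hb : j / 4 % 2 = j' / 4 % 2 := by
    have h := hinv 2 1 (Or.inl (by omega))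
    norm_num at h
    exact h
  have hm4 : (2 * (j / 4) + ε) % 4 = (2 * (j' / 4) + ε) % 4 := by omega
  simp only [gD, Prod.mk.injEq]
  refine ⟨hm4, ?_⟩
  unfold wv
  rw [hm4]
  set L := (2 * (j' / 4) + ε) % 4 with hLdef
  have hL4 : L < 4 := Nat.mod_lt _ (by norm_num)
  by_cases hV : vv (n - 1) = 0
  · simp [hV, Nat.mod_one]
  · have hv' : 1 ≤ vv (n - 1) := by omega
    set Q := qp (n - 1) L with hQdef
    have hQ4 : 4 ≤ Q := qp_ge (n - 1) L hL4 hv'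
    have hdd : ∀ x : ℕ, (2 * (x / 4) + ε) / 2 ^ Q = x / 2 ^ (Q + 1) := by
      intro x
      have h1 : (2 ^ 1 * (x / 4) + ε) / 2 ^ Q = (x / 4) / 2 ^ (Q - 1) :=
        shift_div _ (by norm_num; omega) (by omega)
      norm_num at h1
      rw [h1, Nat.div_div_eq_div_mul]
      congr 1
      rw [show (4 : ℕ) = 2 ^ 2 from rfl, ← pow_add]
      congr 1
      omega
    rw [hdd j, hdd j']
    refine hinv (Q + 1) (vv (n - 1)) ?_
    have := disjA n l L hn hl hL4 hv hv'
    rw [hq]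
    omega

lemma keyB (n l q r : ℕ) (hl : l < 4) (hq : q = qp n l) (hv : 1 ≤ vv n)
    (hr : r < 4) (hne : r ≠ l) (j j' : ℕ)
    (hinv : ∀ Q W : ℕ, Q + W ≤ q ∨ q + vv n ≤ Q → j / 2 ^ Q % 2 ^ W = j' / 2 ^ Q % 2 ^ W) :
    gD n (4 * (j / 4) + r) = gD n (4 * (j' / 4) + r) := by
  have hm4 : (4 * (j / 4) + r) % 4 = r := by omega
  have hm4' : (4 * (j' / 4) + r) % 4 = r := by omega
  simp only [gD, Prod.mk.injEq]
  refine ⟨by rw [hm4, hm4'], ?_⟩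
  unfold wv
  rw [hm4, hm4']
  set Q := qp n r with hQdef
  have hQ4 : 4 ≤ Q := qp_ge n r hr hv
  have hdd : ∀ x : ℕ, (4 * (x / 4) + r) / 2 ^ Q = x / 2 ^ Q := by
    intro x
    have h1 : (2 ^ 2 * (x / 4) + r) / 2 ^ Q = (x / 4) / 2 ^ (Q - 2) :=
      shift_div _ (by norm_num; omega) (by omega)
    norm_num at h1
    rw [h1, Nat.div_div_eq_div_mul]
    congr 1
    rw [show (4 : ℕ) = 2 ^ 2 from rfl, ← pow_add]
    congr 1
    omega
  rw [hdd j, hdd j']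
  refine hinv Q (vv n) ?_
  have := disjB n l r hl hr (fun h => hne h.symm) hv
  rw [hq]
  omega

lemma keyC (n l q r : ℕ) (hl : l < 4) (hq : q = qp n l) (hv : 1 ≤ vv n)
    (hr : r < 8) (j j' : ℕ)
    (hinv : ∀ Q W : ℕ, Q + W ≤ q ∨ q + vv n ≤ Q → j / 2 ^ Q % 2 ^ W = j' / 2 ^ Q % 2 ^ W) :
    gD (n + 1) (8 * (j / 4) + r) = gD (n + 1) (8 * (j' / 4) + r) := by
  have hm4 : (8 * (j / 4) + r) % 4 = r % 4 := by omega
  have hm4' : (8 * (j' / 4) + r) % 4 = r % 4 := by omega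
  simp only [gD, Prod.mk.injEq]
  refine ⟨by rw [hm4, hm4'], ?_⟩
  unfold wv
  rw [hm4, hm4']
  by_cases hV : vv (n + 1) = 0
  · simp [hV, Nat.mod_one]
  · have hv' : 1 ≤ vv (n + 1) := by omega
    set Q := qp (n + 1) (r % 4) with hQdef
    have hQ4 : 4 ≤ Q := qp_ge (n + 1) (r % 4) (Nat.mod_lt _ (by norm_num)) hv'
    have hdd : ∀ x : ℕ, (8 * (x / 4) + r) / 2 ^ Q = x / 2 ^ (Q - 1) := by
      intro x
      have h1 : (2 ^ 3 * (x / 4) + r) / 2 ^ Q = (x / 4) / 2 ^ (Q - 3) :=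
        shift_div _ (by norm_num; omega) (by omega)
      norm_num at h1
      rw [h1, Nat.div_div_eq_div_mul]
      congr 1
      rw [show (4 : ℕ) = 2 ^ 2 from rfl, ← pow_add]
      congr 1
      omega
    rw [hdd j, hdd j']
    refine hinv (Q - 1) (vv (n + 1)) ?_
    have := disjC n l (r % 4) hl (Nat.mod_lt _ (by norm_num)) hv hv'
    rw [hq]
    omega

lemma main_k (n k j j' : ℕ) (hn : 2 ≤ n) (hk : 1 ≤ k) (hk9 : k ≤ 9)
    (hl : j % 4 = j' % 4) (hc : core n j = core n j') :
    gD (tl n k) (f k j) = gD (tl n k) (f k j') := by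
  by_cases hv0 : vv n = 0
  · have hj : j = j' := by
      have d1 := decomp n j
      have d2 := decomp n j'
      unfold wv at d1 d2
      rw [hv0] at d1 d2
      simp only [pow_zero, Nat.mod_one, Nat.mul_zero, Nat.add_zero] at d1 d2
      rw [d1, d2, hc]
    rw [hj]
  · have hv : 1 ≤ vv n := by omega
    have hl4 : j % 4 < 4 := Nat.mod_lt _ (by norm_num)
    have hwj : wv n j < 2 ^ vv n := Nat.mod_lt _ (pow2_pos _)
    have hwj' : wv n j' < 2 ^ vv n := Nat.mod_lt _ (pow2_pos _)
    have hinv : ∀ Q W : ℕ, Q + W ≤ qp n (j % 4) ∨ qp n (j % 4) + vv n ≤ Q →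
        j / 2 ^ Q % 2 ^ W = j' / 2 ^ Q % 2 ^ W := by
      intro Q W hdis
      have ha : j % 2 ^ qp n (j % 4) < 2 ^ qp n (j % 4) := Nat.mod_lt _ (pow2_pos _)
      have d1 := decomp n j
      unfold core at d1
      have d2 := decomp n j'
      rw [← hc, ← hl] at d2
      unfold core at d2
      rw [d1, d2]
      exact extract_inv ha hwj hwj' hdis
    interval_cases k
    · show gD (n - 1) (2 * (j / 4)) = gD (n - 1) (2 * (j' / 4))
      simpa using keyA n (j % 4) (qp n (j % 4)) hn hl4 rfl hv j j' 0 (by norm_num) hinv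
    · show gD (n - 1) (2 * (j / 4) + 1) = gD (n - 1) (2 * (j' / 4) + 1)
      simpa using keyA n (j % 4) (qp n (j % 4)) hn hl4 rfl hv j j' 1 (by norm_num) hinv
    · show gD n (4 * (j / 4) + (j % 4 + 1) % 4) = gD n (4 * (j' / 4) + (j' % 4 + 1) % 4)
      rw [← hl]
      exact keyB n (j % 4) _ ((j % 4 + 1) % 4) hl4 rfl hv (Nat.mod_lt _ (by norm_num))
        (by omega) j j' hinv
    · show gD n (4 * (j / 4) + (j % 4 + 2) % 4) = gD n (4 * (j' / 4) + (j' % 4 + 2) % 4)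
      rw [← hl]
      exact keyB n (j % 4) _ ((j % 4 + 2) % 4) hl4 rfl hv (Nat.mod_lt _ (by norm_num))
        (by omega) j j' hinv
    · show gD n (4 * (j / 4) + (j % 4 + 3) % 4) = gD n (4 * (j' / 4) + (j' % 4 + 3) % 4)
      rw [← hl]
      exact keyB n (j % 4) _ ((j % 4 + 3) % 4) hl4 rfl hv (Nat.mod_lt _ (by norm_num))
        (by omega) j j' hinv
    · show gD (n + 1) (if j % 4 ≤ 1 then 8 * (j / 4) else 8 * (j / 4) + 4)
        = gD (n + 1) (if j' % 4 ≤ 1 then 8 * (j' / 4) else 8 * (j' / 4) + 4)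
      rw [← hl]
      by_cases hle : j % 4 ≤ 1 <;> simp only [hle, if_true, if_false, if_pos, if_neg, not_false_iff]
      · simpa using keyC n (j % 4) _ 0 hl4 rfl hv (by norm_num) j j' hinv
      · exact keyC n (j % 4) _ 4 hl4 rfl hv (by norm_num) j j' hinv
    · show gD (n + 1) (if j % 4 ≤ 1 then 8 * (j / 4) + 1 else 8 * (j / 4) + 5)
        = gD (n + 1) (if j' % 4 ≤ 1 then 8 * (j' / 4) + 1 else 8 * (j' / 4) + 5)
      rw [← hl]
      by_cases hle : j % 4 ≤ 1 <;> simp only [hle, if_true, if_false, if_pos, if_neg, not_false_iff]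
      · exact keyC n (j % 4) _ 1 hl4 rfl hv (by norm_num) j j' hinv
      · exact keyC n (j % 4) _ 5 hl4 rfl hv (by norm_num) j j' hinv
    · show gD (n + 1) (if j % 4 ≤ 1 then 8 * (j / 4) + 2 else 8 * (j / 4) + 6)
        = gD (n + 1) (if j' % 4 ≤ 1 then 8 * (j' / 4) + 2 else 8 * (j' / 4) + 6)
      rw [← hl]
      by_cases hle : j % 4 ≤ 1 <;> simp only [hle, if_true, if_false, if_pos, if_neg, not_false_iff]
      · exact keyC n (j % 4) _ 2 hl4 rfl hv (by norm_num) j j' hinv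
      · exact keyC n (j % 4) _ 6 hl4 rfl hv (by norm_num) j j' hinv
    · show gD (n + 1) (if j % 4 ≤ 1 then 8 * (j / 4) + 3 else 8 * (j / 4) + 7)
        = gD (n + 1) (if j' % 4 ≤ 1 then 8 * (j' / 4) + 3 else 8 * (j' / 4) + 7)
      rw [← hl]
      by_cases hle : j % 4 ≤ 1 <;> simp only [hle, if_true, if_false, if_pos, if_neg, not_false_iff]
      · exact keyC n (j % 4) _ 3 hl4 rfl hv (by norm_num) j j' hinv
      · exact keyC n (j % 4) _ 7 hl4 rfl hv (by norm_num) j j' hinv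

lemma mem_sigmaF {n j : ℕ} : j ∈ sigmaF n ↔ 2 ^ n ≤ j ∧ j < 2 ^ (n + 1) := Finset.mem_Ico

lemma wv_lt (n j : ℕ) : wv n j < 2 ^ vv n := Nat.mod_lt _ (pow2_pos _)

lemma Nb_card {n : ℕ} {A : Finset ℕ} (hA : A ∈ Nb n) : A.card = 2 ^ vv n := by
  obtain ⟨a, ha, rfl⟩ := Finset.mem_image.1 hA
  have hl4 : a % 4 < 4 := Nat.mod_lt _ (by norm_num)
  have hEq : (sigmaF n).filter (fun j => gN n j = gN n a)
      = (Finset.range (2 ^ vv n)).image (fun w => core n a + 2 ^ qp n (a % 4) * w) := by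
    ext j
    simp only [Finset.mem_filter, Finset.mem_image, Finset.mem_range]
    constructor
    · rintro ⟨hjs, hjg⟩
      refine ⟨wv n j, wv_lt n j, ?_⟩
      have hl : j % 4 = a % 4 := congrArg Prod.fst hjg
      have hcc : core n j = core n a := congrArg Prod.snd hjg
      have hd := decomp n j
      rw [hl, hcc] at hd
      exact hd.symm
    · rintro ⟨w, hw, rfl⟩
      by_cases hv0 : vv n = 0
      · have hw0 : w = 0 := by rw [hv0] at hw; simpa using hw
        subst hw0
        have hwa : wv n a = 0 := by unfold wv; rw [hv0]; simp [Nat.mod_one]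
        have hd := decomp n a
        rw [hwa, mul_zero, add_zero] at hd
        rw [mul_zero, add_zero, ← hd]
        exact ⟨ha, rfl⟩
      · have hv : 1 ≤ vv n := by omega
        have hq4 : 4 ≤ qp n (a % 4) := qp_ge n (a % 4) hl4 hv
        have ha2 : a % 2 ^ qp n (a % 4) < 2 ^ qp n (a % 4) := Nat.mod_lt _ (pow2_pos _)
        have hcform : core n a = a % 2 ^ qp n (a % 4)
            + 2 ^ (qp n (a % 4) + vv n) * (a / 2 ^ (qp n (a % 4) + vv n)) := rfl
        have hms := mem_sigmaF.1 ha
        have hqv : qp n (a % 4) + vv n ≤ n := qp_add_le n (a % 4) hl4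
        have hX1 : 2 ^ (n - (qp n (a % 4) + vv n)) ≤ a / 2 ^ (qp n (a % 4) + vv n) := by
          rw [Nat.le_div_iff_mul_le (pow2_pos _), ← pow_add]
          have he : n - (qp n (a % 4) + vv n) + (qp n (a % 4) + vv n) = n := by omega
          rw [he]; exact hms.1
        have hX2 : a / 2 ^ (qp n (a % 4) + vv n) < 2 ^ (n + 1 - (qp n (a % 4) + vv n)) := by
          rw [Nat.div_lt_iff_lt_mul (pow2_pos _), ← pow_add]
          have he : n + 1 - (qp n (a % 4) + vv n) + (qp n (a % 4) + vv n) = n + 1 := by omega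
          rw [he]; exact hms.2
        have hmem := memC hqv ha2 hw hX1 hX2
        have h4q : (4:ℕ) ∣ 2 ^ qp n (a % 4) := by
          have hd : (2:ℕ) ^ 2 ∣ 2 ^ qp n (a % 4) := pow_dvd_pow 2 (by omega)
          norm_num at hd
          exact hd
        have hm4 : (core n a + 2 ^ qp n (a % 4) * w) % 4 = a % 4 := by
          rw [hcform]
          calc (a % 2 ^ qp n (a % 4) + 2 ^ (qp n (a % 4) + vv n) * (a / 2 ^ (qp n (a % 4) + vv n))
                + 2 ^ qp n (a % 4) * w) % 4
              = (a % 2 ^ qp n (a % 4) + 2 ^ (qp n (a % 4) + vv n) * (a / 2 ^ (qp n (a % 4) + vv n))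
                + 2 ^ qp n (a % 4) * w) % 2 ^ qp n (a % 4) % 4 := (Nat.mod_mod_of_dvd _ h4q).symm
            _ = a % 2 ^ qp n (a % 4) % 4 := by rw [b1 ha2]
            _ = a % 4 := Nat.mod_mod_of_dvd a h4q
        constructor
        · rw [hcform]; exact mem_sigmaF.2 hmem
        · have hm4e := hm4
          rw [hcform] at hm4e
          have hcore2 : core n (a % 2 ^ qp n (a % 4)
              + 2 ^ (qp n (a % 4) + vv n) * (a / 2 ^ (qp n (a % 4) + vv n))
              + 2 ^ qp n (a % 4) * w) = core n a := by
            unfold core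
            rw [hm4e, b1 ha2, b3 ha2 hw]
          unfold gN
          rw [hcform, hm4e, hcore2, ← hcform]
  rw [hEq, Finset.card_image_of_injective _ ?hinj, Finset.card_range]
  case hinj =>
    intro x y hxy
    simp only at hxy
    exact Nat.eq_of_mul_eq_mul_left (pow2_pos _) (Nat.add_left_cancel hxy)

lemma vv_real (n : ℕ) : (n : ℝ) / 8 - 2 ≤ (vv n : ℝ) := by
  have key : n ≤ 8 * vv n + 16 := by unfold vv; omega
  have : (n : ℝ) ≤ 8 * (vv n : ℝ) + 16 := by exact_mod_cast key
  linarith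

lemma part_fibers (g : ℕ → ℕ × ℕ) (S : Finset ℕ) :
    IsPartitionOf (S.image fun a => S.filter fun j => g j = g a) S := by
  refine ⟨?_, ?_, ?_⟩
  · intro A hA
    obtain ⟨a, ha, rfl⟩ := Finset.mem_image.1 hA
    exact ⟨a, Finset.mem_filter.2 ⟨ha, rfl⟩⟩
  · intro A hA B hB hne
    obtain ⟨a, ha, rfl⟩ := Finset.mem_image.1 hA
    obtain ⟨b, hb, rfl⟩ := Finset.mem_image.1 hB
    rw [Finset.disjoint_left]
    intro x hxA hxB
    have h1 := (Finset.mem_filter.1 hxA).2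
    have h2 := (Finset.mem_filter.1 hxB).2
    apply hne
    have hab : g a = g b := h1.symm.trans h2
    ext y
    simp only [Finset.mem_filter, hab]
  · ext x
    simp only [Finset.mem_biUnion, id]
    constructor
    · rintro ⟨A, hA, hx⟩
      obtain ⟨a, ha, rfl⟩ := Finset.mem_image.1 hA
      exact (Finset.mem_filter.1 hx).1
    · intro hx
      exact ⟨_, Finset.mem_image_of_mem _ hx, Finset.mem_filter.2 ⟨hx, rfl⟩⟩

lemma f_range {n k j : ℕ} (hn : 2 ≤ n) (hk : 1 ≤ k) (hk9 : k ≤ 9) (hj : j ∈ sigmaF n) :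
    f k j ∈ sigmaF (tl n k) := by
  obtain ⟨m, rfl⟩ : ∃ m, n = m + 2 := ⟨n - 2, by omega⟩
  rw [mem_sigmaF] at hj ⊢
  have E1 : (2:ℕ) ^ (m + 1) = 2 * 2 ^ m := by ring
  have E2 : (2:ℕ) ^ (m + 1 + 1) = 4 * 2 ^ m := by ring
  have E3 : (2:ℕ) ^ (m + 2) = 4 * 2 ^ m := by ring
  have E4 : (2:ℕ) ^ (m + 2 + 1) = 8 * 2 ^ m := by ring
  have E5 : (2:ℕ) ^ (m + 3) = 8 * 2 ^ m := by ring
  have E6 : (2:ℕ) ^ (m + 3 + 1) = 16 * 2 ^ m := by ring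
  rw [E3, E4] at hj
  interval_cases k
  · simp only [f, tl]; norm_num; rw [E1, E2]; omega
  · simp only [f, tl]; norm_num; rw [E1, E2]; omega
  · simp only [f, tl]; norm_num; rw [E3, E4]; omega
  · simp only [f, tl]; norm_num; rw [E3, E4]; omega
  · simp only [f, tl]; norm_num; rw [E3, E4]; omega
  · simp only [f, tl]; norm_num; rw [E5, E6]; split_ifs <;> omega
  · simp only [f, tl]; norm_num; rw [E5, E6]; split_ifs <;> omega
  · simp only [f, tl]; norm_num; rw [E5, E6]; split_ifs <;> omega
  · simp only [f, tl]; norm_num; rw [E5, E6]; split_ifs <;> omega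

end SzankowskiProof

open SzankowskiProof in
/-- Szankowski's combinatorial lemma: there are partitions Δ_n, ∇_n of σ_n and numbers
m_n ≥ 2^{n/8-2} (n ≥ 2) with: (1) m_n ≤ card A ≤ 2m_n for A ∈ ∇_n;
(2) card(A ∩ B) ≤ 1 for A ∈ ∇_n, B ∈ Δ_n; (3) each f_k(A), 1 ≤ k ≤ 9, is contained
in a single element of Δ_{n-1}, Δ_n, or Δ_{n+1}. -/
theorem szankowski_lemma :
    ∃ (Δ : ℕ → Finset (Finset ℕ)) (nab : ℕ → Finset (Finset ℕ)) (m : ℕ → ℝ),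
      (∀ n, 1 ≤ n → IsPartitionOf (Δ n) (sigmaF n)) ∧
      (∀ n, 2 ≤ n →
        IsPartitionOf (nab n) (sigmaF n) ∧
        (2 : ℝ) ^ ((n : ℝ) / 8 - 2) ≤ m n ∧
        (∀ A ∈ nab n, m n ≤ (A.card : ℝ) ∧ (A.card : ℝ) ≤ 2 * m n) ∧
        (∀ A ∈ nab n, ∀ B ∈ Δ n, (A ∩ B).card ≤ 1) ∧
        (∀ A ∈ nab n, ∀ k, 1 ≤ k → k ≤ 9 →
          ∃ B, (B ∈ Δ (n - 1) ∨ B ∈ Δ n ∨ B ∈ Δ (n + 1)) ∧ A.image (f k) ⊆ B)) := by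
  refine ⟨Del, Nb, fun n => (2:ℝ) ^ vv n, ?_, ?_⟩
  · intro n _
    exact part_fibers (gD n) (sigmaF n)
  · intro n hn
    refine ⟨part_fibers (gN n) (sigmaF n), ?_, ?_, ?_, ?_⟩
    · have h1 := vv_real n
      calc (2:ℝ) ^ ((n:ℝ)/8 - 2) ≤ (2:ℝ) ^ ((vv n : ℝ)) :=
            Real.rpow_le_rpow_of_exponent_le one_le_two h1
        _ = 2 ^ vv n := Real.rpow_natCast 2 (vv n)
    · intro A hA
      have hc := Nb_card hA
      rw [hc]
      have hpos : (0:ℝ) < 2 ^ vv n := by positivity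
      constructor
      · push_cast; exact le_refl _
      · push_cast; linarith
    · intro A hA B hB
      obtain ⟨a, ha, rfl⟩ := Finset.mem_image.1 hA
      obtain ⟨b, hb, rfl⟩ := Finset.mem_image.1 hB
      rw [Finset.card_le_one]
      intro x hx y hy
      simp only [Finset.mem_inter, Finset.mem_filter] at hx hy
      have e1 : gN n x = gN n y := hx.1.2.trans hy.1.2.symm
      have e2 : gD n x = gD n y := hx.2.2.trans hy.2.2.symm
      have hl : x % 4 = y % 4 := congrArg Prod.fst e1
      have hcr : core n x = core n y := congrArg Prod.snd e1
      have hwv : wv n x = wv n y := congrArg Prod.snd e2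
      have d1 := decomp n x
      rw [hl, hcr, hwv] at d1
      exact d1.trans (decomp n y).symm
    · intro A hA k hk1 hk9
      obtain ⟨a, ha, rfl⟩ := Finset.mem_image.1 hA
      refine ⟨(sigmaF (tl n k)).filter (fun x => gD (tl n k) x = gD (tl n k) (f k a)), ?_, ?_⟩
      · have hmem : (sigmaF (tl n k)).filter (fun x => gD (tl n k) x = gD (tl n k) (f k a))
            ∈ Del (tl n k) := Finset.mem_image_of_mem _ (f_range hn hk1 hk9 ha)
        by_cases h2 : k ≤ 2
        · left
          have ht : tl n k = n - 1 := by simp [tl, h2]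
          rw [ht] at hmem ⊢; exact hmem
        · by_cases h5 : k ≤ 5
          · right; left
            have ht : tl n k = n := by simp [tl, h2, h5]
            rw [ht] at hmem ⊢; exact hmem
          · right; right
            have ht : tl n k = n + 1 := by simp [tl, h2, h5]
            rw [ht] at hmem ⊢; exact hmem
      · intro x hx
        obtain ⟨j, hj, rfl⟩ := Finset.mem_image.1 hx
        have hjA := Finset.mem_filter.1 hj
        refine Finset.mem_filter.2 ⟨f_range hn hk1 hk9 hjA.1, ?_⟩
        have hl : j % 4 = a % 4 := congrArg Prod.fst hjA.2
        have hcr : core n j = core n a := congrArg Prod.snd hjA.2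
        exact main_k n k j a hn hk1 hk9 hl hcr
end

section
/- For each n ≥ 2 and each j ∈ σ_{n+1}, the vector y_j = 2^{n+1}(β_n - β_{n-1})(e_j) ∈ ℓ²(ℕ) is a linear combination Σ_{k=1}^9 λ_{j,k} e_{f_k(j)} of the nine basis vectors e_{f_1(j)}, ..., e_{f_9(j)}, where exactly eight of the coefficients λ_{j,k} have absolute value 1 and one has absolute value 2; consequently ‖y_j‖² = 12. -/
/-- The basis vectors e_m, as finitely supported functions ℕ → ℂ. -/
noncomputable def e (m : ℕ) : ℕ → ℂ := Pi.single m 1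

/-- z_i = e_{2i} - e_{2i+1} + e_{4i} + e_{4i+1} + e_{4i+2} + e_{4i+3}. -/
noncomputable def z (i : ℕ) : ℕ → ℂ :=
  e (2 * i) - e (2 * i + 1) + e (4 * i) + e (4 * i + 1) + e (4 * i + 2) + e (4 * i + 3)

/-- y_j = 2^{n+1}(β_n - β_{n-1})(e_j), where β_n = (1/2^n) Σ_{i∈σ_n} z_i* ⊗ z_i with
z_i* = (1/2)(e_{2i}* - e_{2i+1}*), and in β_{n-1} the functional z_i* is represented
as (1/4)(e_{4i}* + e_{4i+1}* + e_{4i+2}* + e_{4i+3}*). -/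
noncomputable def y (n j : ℕ) : ℕ → ℂ :=
  (2 : ℂ) ^ (n + 1) •
    ((1 / (2 : ℂ) ^ n) • ∑ i ∈ Finset.Ico (2 ^ n) (2 ^ (n + 1)),
        ((1 / 2 : ℂ) * ((if j = 2 * i then 1 else 0) - (if j = 2 * i + 1 then 1 else 0)))
          • z i
      - (1 / (2 : ℂ) ^ (n - 1)) • ∑ i ∈ Finset.Ico (2 ^ (n - 1)) (2 ^ n),
        ((1 / 4 : ℂ) * ((if j = 4 * i then 1 else 0) + (if j = 4 * i + 1 then 1 else 0)
          + (if j = 4 * i + 2 then 1 else 0) + (if j = 4 * i + 3 then 1 else 0))) • z i)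

private lemma v9_0 {α : Type*} (a0 a1 a2 a3 a4 a5 a6 a7 a8 : α) : ![a0,a1,a2,a3,a4,a5,a6,a7,a8] ⟨0, by omega⟩ = a0 := rfl
private lemma v9_1 {α : Type*} (a0 a1 a2 a3 a4 a5 a6 a7 a8 : α) : ![a0,a1,a2,a3,a4,a5,a6,a7,a8] ⟨1, by omega⟩ = a1 := rfl
private lemma v9_2 {α : Type*} (a0 a1 a2 a3 a4 a5 a6 a7 a8 : α) : ![a0,a1,a2,a3,a4,a5,a6,a7,a8] ⟨2, by omega⟩ = a2 := rfl
private lemma v9_3 {α : Type*} (a0 a1 a2 a3 a4 a5 a6 a7 a8 : α) : ![a0,a1,a2,a3,a4,a5,a6,a7,a8] ⟨3, by omega⟩ = a3 := rfl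
private lemma v9_4 {α : Type*} (a0 a1 a2 a3 a4 a5 a6 a7 a8 : α) : ![a0,a1,a2,a3,a4,a5,a6,a7,a8] ⟨4, by omega⟩ = a4 := rfl
private lemma v9_5 {α : Type*} (a0 a1 a2 a3 a4 a5 a6 a7 a8 : α) : ![a0,a1,a2,a3,a4,a5,a6,a7,a8] ⟨5, by omega⟩ = a5 := rfl
private lemma v9_6 {α : Type*} (a0 a1 a2 a3 a4 a5 a6 a7 a8 : α) : ![a0,a1,a2,a3,a4,a5,a6,a7,a8] ⟨6, by omega⟩ = a6 := rfl
private lemma v9_7 {α : Type*} (a0 a1 a2 a3 a4 a5 a6 a7 a8 : α) : ![a0,a1,a2,a3,a4,a5,a6,a7,a8] ⟨7, by omega⟩ = a7 := rfl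
private lemma v9_8 {α : Type*} (a0 a1 a2 a3 a4 a5 a6 a7 a8 : α) : ![a0,a1,a2,a3,a4,a5,a6,a7,a8] ⟨8, by omega⟩ = a8 := rfl

private lemma e_apply' (a x : ℕ) : e a x = if x = a then 1 else 0 := by
  simp [e, Pi.single_apply]

private lemma sum_sq_of_comb (N : ℕ) (lam : Fin 9 → ℂ) (g : Fin 9 → ℕ) (Y : ℕ → ℂ)
    (hY : Y = ∑ k, lam k • e (g k))
    (hg : ∀ k k' : Fin 9, g k = g k' → k = k') (hgN : ∀ k, g k < N) :
    ∑ x ∈ Finset.range N, ‖Y x‖ ^ 2 = ∑ k, ‖lam k‖ ^ 2 := by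
  have hYx : ∀ x, Y x = ∑ k, if x = g k then lam k else 0 := by
    intro x
    rw [hY]
    simp only [Finset.sum_apply, Pi.smul_apply, e_apply', smul_eq_mul]
    exact Finset.sum_congr rfl (fun k _ => by split <;> simp)
  have hsub : Finset.image g Finset.univ ⊆ Finset.range N := by
    intro x hx
    simp only [Finset.mem_image] at hx
    obtain ⟨k, -, rfl⟩ := hx
    exact Finset.mem_range.2 (hgN k)
  rw [← Finset.sum_subset hsub ?_]
  · rw [Finset.sum_image (fun k _ k' _ h => hg k k' h)]
    refine Finset.sum_congr rfl (fun k _ => ?_)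
    have : Y (g k) = lam k := by
      rw [hYx]
      rw [Finset.sum_eq_single k (fun k' _ hk' => if_neg (fun h => hk' (hg k' k h.symm))) (by simp)]
      simp
    rw [this]
  · intro x _ hx
    have : Y x = 0 := by
      rw [hYx]
      refine Finset.sum_eq_zero (fun k _ => if_neg (fun h => hx ?_))
      exact Finset.mem_image.2 ⟨k, Finset.mem_univ k, h.symm⟩
    simp [this]

private lemma key_lemma (m i r : ℕ) (hr : r < 4) (hj1 : 2^(m+3) ≤ 4*i+r)
    (hj2 : 4*i+r < 2^(m+4)) :
    y (m+2) (4*i+r)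
      = (if r % 2 = 0 then (1:ℂ) else -1) • z (2*i + r/2) - z i := by
  have e1 : (2:ℕ)^(m+2) = 2*2^(m+1) := by ring
  have e2 : (2:ℕ)^(m+3) = 4*2^(m+1) := by ring
  have e3 : (2:ℕ)^(m+4) = 8*2^(m+1) := by ring
  have hmem1 : 2*i + r/2 ∈ Finset.Ico (2^(m+2)) (2^(m+3)) := by
    simp only [Finset.mem_Ico]; omega
  have hmem2 : i ∈ Finset.Ico (2^(m+1)) (2^(m+2)) := by
    simp only [Finset.mem_Ico]; omega
  have hsum1 : ∑ i' ∈ Finset.Ico (2^(m+2)) (2^(m+3)),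
      ((1/2 : ℂ) * ((if 4*i+r = 2*i' then (1:ℂ) else 0) - (if 4*i+r = 2*i'+1 then (1:ℂ) else 0))) • z i'
      = ((1/2 : ℂ) * (if r % 2 = 0 then 1 else -1)) • z (2*i + r/2) := by
    rw [Finset.sum_eq_single_of_mem (2*i + r/2) hmem1]
    · congr 1
      by_cases h0 : r % 2 = 0
      · rw [if_pos (by omega), if_neg (by omega), if_pos h0]; norm_num
      · rw [if_neg (by omega), if_pos (by omega), if_neg h0]; norm_num
    · intro b _ hb
      rw [if_neg (by omega), if_neg (by omega)]
      simp
  have hsum2 : ∑ i' ∈ Finset.Ico (2^(m+1)) (2^(m+2)),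
      ((1/4 : ℂ) * ((if 4*i+r = 4*i' then (1:ℂ) else 0) + (if 4*i+r = 4*i'+1 then (1:ℂ) else 0)
        + (if 4*i+r = 4*i'+2 then (1:ℂ) else 0) + (if 4*i+r = 4*i'+3 then (1:ℂ) else 0))) • z i'
      = (1/4 : ℂ) • z i := by
    rw [Finset.sum_eq_single_of_mem i hmem2]
    · congr 1
      simp only [show (4*i+r = 4*i) ↔ r = 0 from by omega, show (4*i+r = 4*i+1) ↔ r = 1 from by omega,
        show (4*i+r = 4*i+2) ↔ r = 2 from by omega, show (4*i+r = 4*i+3) ↔ r = 3 from by omega]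
      rcases (by omega : r = 0 ∨ r = 1 ∨ r = 2 ∨ r = 3) with rfl|rfl|rfl|rfl <;> norm_num
    · intro b _ hb
      rw [if_neg (by omega), if_neg (by omega), if_neg (by omega), if_neg (by omega)]
      simp
  rw [y, show m+2-1 = m+1 from by omega, show m+2+1 = m+3 from by omega]
  rw [hsum1, hsum2]
  match_scalars
  · have : (2:ℂ)^(m+2) ≠ 0 := pow_ne_zero _ two_ne_zero
    field_simp
    ring
  · have : (2:ℂ)^(m+1) ≠ 0 := pow_ne_zero _ two_ne_zero
    field_simp
    ring

private lemma z_even (i : ℕ) :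
    z (2*i) = e (4*i) - e (4*i+1) + e (8*i) + e (8*i+1) + e (8*i+2) + e (8*i+3) := by
  simp only [z, show 2*(2*i) = 4*i from by ring, show 2*(2*i)+1 = 4*i+1 from by ring,
    show 4*(2*i) = 8*i from by ring, show 4*(2*i)+1 = 8*i+1 from by ring,
    show 4*(2*i)+2 = 8*i+2 from by ring, show 4*(2*i)+3 = 8*i+3 from by ring]

private lemma z_odd (i : ℕ) :
    z (2*i+1) = e (4*i+2) - e (4*i+3) + e (8*i+4) + e (8*i+5) + e (8*i+6) + e (8*i+7) := by
  simp only [z, show 2*(2*i+1) = 4*i+2 from by ring, show 2*(2*i+1)+1 = 4*i+3 from by ring,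
    show 4*(2*i+1) = 8*i+4 from by ring, show 4*(2*i+1)+1 = 8*i+5 from by ring,
    show 4*(2*i+1)+2 = 8*i+6 from by ring, show 4*(2*i+1)+3 = 8*i+7 from by ring]

set_option maxHeartbeats 2000000 in
/-- For n ≥ 2 and j ∈ σ_{n+1}, y_j = Σ_{k=1}^9 λ_{j,k} e_{f_k(j)} where exactly eight
coefficients have absolute value 1, one has absolute value 2, and ‖y_j‖² = 12. -/
theorem y_structure (n : ℕ) (hn : 2 ≤ n) (j : ℕ)
    (hj : j ∈ Finset.Ico (2 ^ (n + 1)) (2 ^ (n + 2))) :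
    ∃ lam : Fin 9 → ℂ,
      y n j = ∑ k : Fin 9, lam k • e (f (k.val + 1) j) ∧
      (∃ k0 : Fin 9, ‖lam k0‖ = 2 ∧
        ∀ k : Fin 9, k ≠ k0 → ‖lam k‖ = 1) ∧
      ∑ m ∈ Finset.range (2 ^ (n + 3)), ‖y n j m‖ ^ 2 = 12 := by
  obtain ⟨m, rfl⟩ : ∃ m, n = m + 2 := ⟨n - 2, by omega⟩
  simp only [Finset.mem_Ico] at hj
  obtain ⟨hj1, hj2⟩ := hj
  rw [show m+2+1 = m+3 from by omega] at hj1
  rw [show m+2+2 = m+4 from by omega] at hj2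
  obtain ⟨i, r, hrlt, rfl⟩ : ∃ i r, r < 4 ∧ j = 4*i + r := ⟨j/4, j%4, by omega, by omega⟩
  have key := key_lemma m i r hrlt hj1 hj2
  have e0 : (1:ℕ) ≤ 2^m := Nat.one_le_two_pow
  have e3 : (2:ℕ)^(m+3) = 8*2^m := by ring
  have e4 : (2:ℕ)^(m+4) = 16*2^m := by ring
  have e5 : (2:ℕ)^(m+2+3) = 32*2^m := by ring
  have hi2 : 2 ≤ i := by omega
  have hiu : i < 4*2^m := by omega
  rcases (by omega : r = 0 ∨ r = 1 ∨ r = 2 ∨ r = 3) with rfl|rfl|rfl|rfl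
  · -- r = 0
    have hd : (4*i+0)/4 = i := by omega
    have hm4 : (4*i+0)%4 = 0 := by omega
    have hz1 : z (2*i + 0/2) = e (4*i) - e (4*i+1) + e (8*i) + e (8*i+1) + e (8*i+2) + e (8*i+3) := by
      rw [show 2*i + 0/2 = 2*i from by omega]
      exact z_even i
    have hy : y (m+2) (4*i+0) = ∑ k : Fin 9, (![(-1:ℂ), 1, -2, -1, -1, 1, 1, 1, 1] : Fin 9 → ℂ) k • e (f (k.val+1) (4*i+0)) := by
      rw [key, hz1]
      simp only [Fin.sum_univ_succ, Fin.sum_univ_zero, f, hd, hm4]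
      norm_num
      simp only [z, Matrix.cons_val]
      module
    have hvals : ∀ k : Fin 9, f (k.val+1) (4*i+0)
        = ![2*i, 2*i+1, 4*i+1, 4*i+2, 4*i+3, 8*i, 8*i+1, 8*i+2, 8*i+3] k := by
      intro k; fin_cases k <;> simp [f, hd, hm4, v9_0, v9_1, v9_2, v9_3, v9_4, v9_5, v9_6, v9_7, v9_8] <;> rfl
    have hinj : ∀ k k' : Fin 9, f (k.val+1) (4*i+0) = f (k'.val+1) (4*i+0) → k = k' := by
      intro k k' h; rw [hvals k, hvals k'] at h
      clear * - h hi2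
      fin_cases k <;> fin_cases k' <;> simp_all only [v9_0, v9_1, v9_2, v9_3, v9_4, v9_5, v9_6, v9_7, v9_8] <;> omega
    have hgN : ∀ k : Fin 9, f (k.val+1) (4*i+0) < 2^(m+2+3) := by
      intro k; rw [hvals k]; fin_cases k <;> simp only [v9_0, v9_1, v9_2, v9_3, v9_4, v9_5, v9_6, v9_7, v9_8] <;> omega
    refine ⟨_, hy, ⟨2, ?_, ?_⟩, ?_⟩
    · show ‖(-2:ℂ)‖ = 2; norm_num
    · intro k hk; fin_cases k <;> first | exact absurd rfl hk | norm_num [Matrix.cons_val_succ]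
    · rw [sum_sq_of_comb (2^(m+2+3)) _ _ _ hy hinj hgN]
      simp [Fin.sum_univ_succ]
      norm_num
  · -- r = 1
    have hd : (4*i+1)/4 = i := by omega
    have hm4 : (4*i+1)%4 = 1 := by omega
    have hz1 : z (2*i + 1/2) = e (4*i) - e (4*i+1) + e (8*i) + e (8*i+1) + e (8*i+2) + e (8*i+3) := by
      rw [show 2*i + 1/2 = 2*i from by omega]
      exact z_even i
    have hy : y (m+2) (4*i+1) = ∑ k : Fin 9, (![(-1:ℂ), 1, -1, -1, -2, -1, -1, -1, -1] : Fin 9 → ℂ) k • e (f (k.val+1) (4*i+1)) := by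
      rw [key, hz1]
      simp only [Fin.sum_univ_succ, Fin.sum_univ_zero, f, hd, hm4]
      norm_num
      simp only [z, Matrix.cons_val]
      module
    have hvals : ∀ k : Fin 9, f (k.val+1) (4*i+1)
        = ![2*i, 2*i+1, 4*i+2, 4*i+3, 4*i, 8*i, 8*i+1, 8*i+2, 8*i+3] k := by
      intro k; fin_cases k <;> simp [f, hd, hm4, v9_0, v9_1, v9_2, v9_3, v9_4, v9_5, v9_6, v9_7, v9_8] <;> rfl
    have hinj : ∀ k k' : Fin 9, f (k.val+1) (4*i+1) = f (k'.val+1) (4*i+1) → k = k' := by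
      intro k k' h; rw [hvals k, hvals k'] at h
      clear * - h hi2
      fin_cases k <;> fin_cases k' <;> simp_all only [v9_0, v9_1, v9_2, v9_3, v9_4, v9_5, v9_6, v9_7, v9_8] <;> omega
    have hgN : ∀ k : Fin 9, f (k.val+1) (4*i+1) < 2^(m+2+3) := by
      intro k; rw [hvals k]; fin_cases k <;> simp only [v9_0, v9_1, v9_2, v9_3, v9_4, v9_5, v9_6, v9_7, v9_8] <;> omega
    refine ⟨_, hy, ⟨4, ?_, ?_⟩, ?_⟩
    · show ‖(-2:ℂ)‖ = 2; norm_num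
    · intro k hk; fin_cases k <;> first | exact absurd rfl hk | norm_num [Matrix.cons_val_succ]
    · rw [sum_sq_of_comb (2^(m+2+3)) _ _ _ hy hinj hgN]
      simp [Fin.sum_univ_succ]
      norm_num
  · -- r = 2
    have hd : (4*i+2)/4 = i := by omega
    have hm4 : (4*i+2)%4 = 2 := by omega
    have hz1 : z (2*i + 2/2) = e (4*i+2) - e (4*i+3) + e (8*i+4) + e (8*i+5) + e (8*i+6) + e (8*i+7) := by
      rw [show 2*i + 2/2 = 2*i+1 from by omega]
      exact z_odd i
    have hy : y (m+2) (4*i+2) = ∑ k : Fin 9, (![(-1:ℂ), 1, -2, -1, -1, 1, 1, 1, 1] : Fin 9 → ℂ) k • e (f (k.val+1) (4*i+2)) := by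
      rw [key, hz1]
      simp only [Fin.sum_univ_succ, Fin.sum_univ_zero, f, hd, hm4]
      norm_num
      simp only [z, Matrix.cons_val]
      module
    have hvals : ∀ k : Fin 9, f (k.val+1) (4*i+2)
        = ![2*i, 2*i+1, 4*i+3, 4*i, 4*i+1, 8*i+4, 8*i+5, 8*i+6, 8*i+7] k := by
      intro k; fin_cases k <;> simp [f, hd, hm4, v9_0, v9_1, v9_2, v9_3, v9_4, v9_5, v9_6, v9_7, v9_8] <;> rfl
    have hinj : ∀ k k' : Fin 9, f (k.val+1) (4*i+2) = f (k'.val+1) (4*i+2) → k = k' := by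
      intro k k' h; rw [hvals k, hvals k'] at h
      clear * - h hi2
      fin_cases k <;> fin_cases k' <;> simp_all only [v9_0, v9_1, v9_2, v9_3, v9_4, v9_5, v9_6, v9_7, v9_8] <;> omega
    have hgN : ∀ k : Fin 9, f (k.val+1) (4*i+2) < 2^(m+2+3) := by
      intro k; rw [hvals k]; fin_cases k <;> simp only [v9_0, v9_1, v9_2, v9_3, v9_4, v9_5, v9_6, v9_7, v9_8] <;> omega
    refine ⟨_, hy, ⟨2, ?_, ?_⟩, ?_⟩
    · show ‖(-2:ℂ)‖ = 2; norm_num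
    · intro k hk; fin_cases k <;> first | exact absurd rfl hk | norm_num [Matrix.cons_val_succ]
    · rw [sum_sq_of_comb (2^(m+2+3)) _ _ _ hy hinj hgN]
      simp [Fin.sum_univ_succ]
      norm_num
  · -- r = 3
    have hd : (4*i+3)/4 = i := by omega
    have hm4 : (4*i+3)%4 = 3 := by omega
    have hz1 : z (2*i + 3/2) = e (4*i+2) - e (4*i+3) + e (8*i+4) + e (8*i+5) + e (8*i+6) + e (8*i+7) := by
      rw [show 2*i + 3/2 = 2*i+1 from by omega]
      exact z_odd i
    have hy : y (m+2) (4*i+3) = ∑ k : Fin 9, (![(-1:ℂ), 1, -1, -1, -2, -1, -1, -1, -1] : Fin 9 → ℂ) k • e (f (k.val+1) (4*i+3)) := by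
      rw [key, hz1]
      simp only [Fin.sum_univ_succ, Fin.sum_univ_zero, f, hd, hm4]
      norm_num
      simp only [z, Matrix.cons_val]
      module
    have hvals : ∀ k : Fin 9, f (k.val+1) (4*i+3)
        = ![2*i, 2*i+1, 4*i, 4*i+1, 4*i+2, 8*i+4, 8*i+5, 8*i+6, 8*i+7] k := by
      intro k; fin_cases k <;> simp [f, hd, hm4, v9_0, v9_1, v9_2, v9_3, v9_4, v9_5, v9_6, v9_7, v9_8] <;> rfl
    have hinj : ∀ k k' : Fin 9, f (k.val+1) (4*i+3) = f (k'.val+1) (4*i+3) → k = k' := by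
      intro k k' h; rw [hvals k, hvals k'] at h
      clear * - h hi2
      fin_cases k <;> fin_cases k' <;> simp_all only [v9_0, v9_1, v9_2, v9_3, v9_4, v9_5, v9_6, v9_7, v9_8] <;> omega
    have hgN : ∀ k : Fin 9, f (k.val+1) (4*i+3) < 2^(m+2+3) := by
      intro k; rw [hvals k]; fin_cases k <;> simp only [v9_0, v9_1, v9_2, v9_3, v9_4, v9_5, v9_6, v9_7, v9_8] <;> omega
    refine ⟨_, hy, ⟨4, ?_, ?_⟩, ?_⟩
    · show ‖(-2:ℂ)‖ = 2; norm_num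
    · intro k hk; fin_cases k <;> first | exact absurd rfl hk | norm_num [Matrix.cons_val_succ]
    · rw [sum_sq_of_comb (2^(m+2+3)) _ _ _ hy hinj hgN]
      simp [Fin.sum_univ_succ]
      norm_num
end
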